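/- Let p be an odd prime and let R = ℤ[X,Y]/(2X, pY). Consider the ring homomorphism φ : R → (ℤ/2)[X] × (ℤ/p)[Y] determined by sending the image of X to (X, 0) and the image of Y to (0, Y), and reducing integer coefficients modulo 2 and modulo p respectively in the two factors. Then the kernel of φ is exactly the ideal of R generated by the constant 2p. -/
import Mathlib


open MvPolynomial

/-- The ideal `(2X, pY)` of `ℤ[X,Y]`. -/
noncomputable def dihedralIdeal (p : ℕ) : Ideal (MvPolynomial (Fin 2) ℤ) :=
  Ideal.span {C 2 * X 0, C (p : ℤ) * X 1}

/-- The ring homomorphism `ℤ[X,Y] → (ℤ/2)[X] × (ℤ/p)[Y]` sending `X ↦ (X, 0)`,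
`Y ↦ (0, Y)` and reducing integer coefficients mod `2` and mod `p` respectively. -/
noncomputable def psi (p : ℕ) :
    MvPolynomial (Fin 2) ℤ →+* Polynomial (ZMod 2) × Polynomial (ZMod p) :=
  RingHom.prod
    (eval₂Hom (Polynomial.C.comp (Int.castRingHom (ZMod 2))) ![Polynomial.X, 0])
    (eval₂Hom (Polynomial.C.comp (Int.castRingHom (ZMod p))) ![0, Polynomial.X])

theorem psi_vanishes (p : ℕ) : ∀ a ∈ dihedralIdeal p, psi p a = 0 := by
  intro a ha
  have hle : dihedralIdeal p ≤ RingHom.ker (psi p) := by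
    rw [dihedralIdeal, Ideal.span_le]
    rintro x hx
    simp only [Set.mem_insert_iff, Set.mem_singleton_iff] at hx
    rcases hx with rfl | rfl
    · have h2 : ((2 : ℤ) : ZMod 2) = 0 := by decide
      have h2' : (2 : Polynomial (ZMod 2)) = 0 := by
        rw [show (2 : Polynomial (ZMod 2)) = Polynomial.C (2 : ZMod 2) from (map_ofNat _ 2).symm,
          show (2 : ZMod 2) = 0 by decide, map_zero]
      show psi p (C 2 * X 0) = 0
      simp [psi, h2, h2', Prod.ext_iff]
    · have hpz : ((p : ℤ) : ZMod p) = 0 := by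
        push_cast
        simp
      show psi p (C (p : ℤ) * X 1) = 0
      simp [psi, hpz, Prod.ext_iff]
  exact hle ha

/-- The induced ring homomorphism `φ : ℤ[X,Y]/(2X, pY) → (ℤ/2)[X] × (ℤ/p)[Y]`. -/
noncomputable def phi (p : ℕ) :
    MvPolynomial (Fin 2) ℤ ⧸ dihedralIdeal p →+* Polynomial (ZMod 2) × Polynomial (ZMod p) :=
  Ideal.Quotient.lift (dihedralIdeal p) (psi p) (psi_vanishes p)

private lemma coeff_eval_fst {R : Type*} [CommRing R] (g : ℤ →+* R)
    (f : MvPolynomial (Fin 2) ℤ) (n : ℕ) :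
    (eval₂ (Polynomial.C.comp g) ![Polynomial.X, 0] f).coeff n
      = g (coeff (Finsupp.single 0 n) f) := by
  rw [eval₂_eq', Polynomial.finset_sum_coeff]
  have key : ∀ d ∈ f.support,
      ((Polynomial.C.comp g) (coeff d f) * ∏ i, (![Polynomial.X, 0] : Fin 2 → Polynomial R) i ^ d i).coeff n
        = if d = Finsupp.single 0 n then g (coeff d f) else 0 := by
    intro d _
    rw [RingHom.comp_apply, Fin.prod_univ_two]
    simp only [Matrix.cons_val_zero, Matrix.cons_val_one, Matrix.head_cons]
    by_cases h1 : d 1 = 0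
    · rw [h1, pow_zero, mul_one, Polynomial.coeff_C_mul, Polynomial.coeff_X_pow]
      by_cases h0 : d 0 = n
      · have : d = Finsupp.single 0 n := by
          ext i
          fin_cases i
          · simpa using h0
          · simpa using h1
        simp [this, h0]
      · have : d ≠ Finsupp.single 0 n := by
          intro h; apply h0; rw [h]; simp
        rw [if_neg (fun he => h0 he.symm), mul_zero, if_neg this]
    · have : d ≠ Finsupp.single 0 n := by
        intro h; apply h1; rw [h]; simp
      rw [zero_pow h1]
      simp [this]
  rw [Finset.sum_congr rfl key, Finset.sum_ite_eq' f.support (Finsupp.single 0 n)]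
  split_ifs with h
  · rfl
  · rw [notMem_support_iff.mp h, map_zero]

private lemma coeff_eval_snd {R : Type*} [CommRing R] (g : ℤ →+* R)
    (f : MvPolynomial (Fin 2) ℤ) (n : ℕ) :
    (eval₂ (Polynomial.C.comp g) ![0, Polynomial.X] f).coeff n
      = g (coeff (Finsupp.single 1 n) f) := by
  rw [eval₂_eq', Polynomial.finset_sum_coeff]
  have key : ∀ d ∈ f.support,
      ((Polynomial.C.comp g) (coeff d f) * ∏ i, (![0, Polynomial.X] : Fin 2 → Polynomial R) i ^ d i).coeff n
        = if d = Finsupp.single 1 n then g (coeff d f) else 0 := by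
    intro d _
    rw [RingHom.comp_apply, Fin.prod_univ_two]
    simp only [Matrix.cons_val_zero, Matrix.cons_val_one, Matrix.head_cons]
    by_cases h0 : d 0 = 0
    · rw [h0, pow_zero, one_mul, Polynomial.coeff_C_mul, Polynomial.coeff_X_pow]
      by_cases h1 : d 1 = n
      · have : d = Finsupp.single 1 n := by
          ext i
          fin_cases i
          · simpa using h0
          · simpa using h1
        simp [this, h1]
      · have : d ≠ Finsupp.single 1 n := by
          intro h; apply h1; rw [h]; simp
        rw [if_neg (fun he => h1 he.symm), mul_zero, if_neg this]
    · have : d ≠ Finsupp.single 1 n := by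
        intro h; apply h0; rw [h]; simp
      rw [zero_pow h0, zero_mul]
      simp [this]
  rw [Finset.sum_congr rfl key, Finset.sum_ite_eq' f.support (Finsupp.single 1 n)]
  split_ifs with h
  · rfl
  · rw [notMem_support_iff.mp h, map_zero]

section Jlemmas

variable (p : ℕ)

/-- The ideal `(2p, 2X, pY)` of `ℤ[X,Y]`. -/
noncomputable def bigIdeal : Ideal (MvPolynomial (Fin 2) ℤ) :=
  Ideal.span {C (2 * p : ℤ), C 2 * X 0, C (p : ℤ) * X 1}

private lemma gen1_mem : C (2:ℤ) * X 0 ∈ bigIdeal p :=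
  Ideal.subset_span (by simp)

private lemma gen2_mem : C ((p : ℤ)) * X 1 ∈ bigIdeal p :=
  Ideal.subset_span (by simp)

private lemma gen0_mem : C ((2 * p : ℤ)) ∈ bigIdeal p :=
  Ideal.subset_span (by simp)

private lemma CX_eq (a : ℤ) (i : Fin 2) :
    C a * X i = monomial (Finsupp.single i 1) a := by
  rw [X, C_mul_monomial, mul_one]

private lemma mem_J_1 (v : Fin 2 →₀ ℕ) (c : ℤ) (h0 : 1 ≤ v 0) (hc : (2:ℤ) ∣ c) :
    monomial v c ∈ bigIdeal p := by
  obtain ⟨d, rfl⟩ := hc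
  have hv : Finsupp.single 0 1 + (v - Finsupp.single 0 1) = v := by
    ext i
    fin_cases i <;> simp [Finsupp.single_apply] <;> omega
  have : (C (2:ℤ) * X 0) * monomial (v - Finsupp.single 0 1) d = monomial v (2 * d) := by
    rw [CX_eq, monomial_mul, hv]
  rw [← this]
  exact Ideal.mul_mem_right _ _ (gen1_mem p)

private lemma mem_J_2 (v : Fin 2 →₀ ℕ) (c : ℤ) (h1 : 1 ≤ v 1) (hc : ((p:ℤ)) ∣ c) :
    monomial v c ∈ bigIdeal p := by
  obtain ⟨d, rfl⟩ := hc
  have hv : Finsupp.single 1 1 + (v - Finsupp.single 1 1) = v := by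
    ext i
    fin_cases i <;> simp [Finsupp.single_apply] <;> omega
  have : (C ((p:ℤ)) * X 1) * monomial (v - Finsupp.single 1 1) d = monomial v ((p:ℤ) * d) := by
    rw [CX_eq, monomial_mul, hv]
  rw [← this]
  exact Ideal.mul_mem_right _ _ (gen2_mem p)

private lemma mem_J_xy (hodd : Odd p) (v : Fin 2 →₀ ℕ) (c : ℤ)
    (h0 : 1 ≤ v 0) (h1 : 1 ≤ v 1) : monomial v c ∈ bigIdeal p := by
  obtain ⟨k, hk⟩ := hodd
  have hkz : (p : ℤ) = 2 * k + 1 := by exact_mod_cast congrArg (Nat.cast : ℕ → ℤ) hk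
  have hc : c = c * (p:ℤ) - 2 * (c * k) := by rw [hkz]; ring
  rw [hc, map_sub]
  exact Ideal.sub_mem _ (mem_J_2 p v _ h1 ⟨c, mul_comm _ _⟩)
    (mem_J_1 p v _ h0 ⟨c * k, rfl⟩)

private lemma mem_J_const (hodd : Odd p) (c : ℤ) (h2 : (2:ℤ) ∣ c) (hpd : ((p:ℤ)) ∣ c) :
    C c ∈ bigIdeal p := by
  have hcop : IsCoprime (2:ℤ) ((p:ℤ)) := by
    rw [Int.isCoprime_iff_gcd_eq_one]
    have : Nat.Coprime 2 p := Nat.coprime_two_left.mpr hodd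
    simpa [Int.gcd] using this
  obtain ⟨d, rfl⟩ := hcop.mul_dvd h2 hpd
  rw [map_mul]
  exact Ideal.mul_mem_right _ _ (gen0_mem p)

end Jlemmas

private lemma ker_psi_eq (p : ℕ) (hp : p.Prime) (hodd : Odd p) :
    RingHom.ker (psi p) = bigIdeal p := by
  apply le_antisymm
  · intro f hf
    rw [RingHom.mem_ker] at hf
    have hf1 : eval₂ (Polynomial.C.comp (Int.castRingHom (ZMod 2))) ![Polynomial.X, 0] f = 0 :=
      congrArg Prod.fst hf
    have hf2 : eval₂ (Polynomial.C.comp (Int.castRingHom (ZMod p))) ![0, Polynomial.X] f = 0 :=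
      congrArg Prod.snd hf
    have h2 : ∀ n, (2:ℤ) ∣ coeff (Finsupp.single 0 n) f := by
      intro n
      have := congrArg (fun q => Polynomial.coeff q n) hf1
      simp only [Polynomial.coeff_zero] at this
      rw [coeff_eval_fst] at this
      simpa using (ZMod.intCast_zmod_eq_zero_iff_dvd _ 2).mp this
    have hpd : ∀ n, ((p:ℤ)) ∣ coeff (Finsupp.single 1 n) f := by
      intro n
      have := congrArg (fun q => Polynomial.coeff q n) hf2
      simp only [Polynomial.coeff_zero] at this
      rw [coeff_eval_snd] at this
      simpa using (ZMod.intCast_zmod_eq_zero_iff_dvd _ p).mp this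
    nth_rewrite 1 [f.as_sum]
    apply Ideal.sum_mem
    intro v hv
    rcases Nat.eq_zero_or_pos (v 0) with h0 | h0 <;>
      rcases Nat.eq_zero_or_pos (v 1) with h1 | h1
    · have hv0 : v = 0 := by
        ext i; fin_cases i <;> simpa
      have hc2 : (2:ℤ) ∣ coeff v f := by
        rw [hv0, ← Finsupp.single_zero (0 : Fin 2)]; exact h2 0
      have hcp : ((p:ℤ)) ∣ coeff v f := by
        rw [hv0, ← Finsupp.single_zero (1 : Fin 2)]; exact hpd 0
      have hmono : monomial v (coeff v f) = C (coeff v f) := by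
        rw [hv0, monomial_zero']
      rw [hmono]
      exact mem_J_const p hodd _ hc2 hcp
    · have hv0 : Finsupp.single 1 (v 1) = v := by
        ext i; fin_cases i <;> simp [h0]
      have hcp : ((p:ℤ)) ∣ coeff v f := by rw [← hv0]; exact hpd (v 1)
      exact mem_J_2 p _ _ h1 hcp
    · have hv0 : Finsupp.single 0 (v 0) = v := by
        ext i; fin_cases i <;> simp [h1]
      have hc2 : (2:ℤ) ∣ coeff v f := by rw [← hv0]; exact h2 (v 0)
      exact mem_J_1 p _ _ h0 hc2
    · exact mem_J_xy p hodd v _ h0 h1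
  · rw [bigIdeal, Ideal.span_le]
    rintro x hx
    simp only [Set.mem_insert_iff, Set.mem_singleton_iff] at hx
    rcases hx with rfl | hx
    · rw [SetLike.mem_coe, RingHom.mem_ker]
      have e1 : ((2 * p : ℤ) : ZMod 2) = 0 := by
        rw [ZMod.intCast_zmod_eq_zero_iff_dvd]; exact ⟨p, by push_cast; ring⟩
      have e2 : ((2 * p : ℤ) : ZMod p) = 0 := by
        rw [ZMod.intCast_zmod_eq_zero_iff_dvd]; exact ⟨2, by push_cast; ring⟩
      refine Prod.ext ?_ ?_
      · show eval₂ (Polynomial.C.comp (Int.castRingHom (ZMod 2))) ![Polynomial.X, 0] (C (2 * p : ℤ)) = 0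
        rw [eval₂_C, RingHom.comp_apply]
        show Polynomial.C (((2 * p : ℤ) : ZMod 2)) = 0
        rw [e1, map_zero]
      · show eval₂ (Polynomial.C.comp (Int.castRingHom (ZMod p))) ![0, Polynomial.X] (C (2 * p : ℤ)) = 0
        rw [eval₂_C, RingHom.comp_apply]
        show Polynomial.C (((2 * p : ℤ) : ZMod p)) = 0
        rw [e2, map_zero]
    · rw [SetLike.mem_coe, RingHom.mem_ker]
      apply psi_vanishes
      rcases hx with rfl | rfl
      · exact Ideal.subset_span (by simp)
      · exact Ideal.subset_span (by simp)

/-- For `p` an odd prime, the kernel of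
`φ : ℤ[X,Y]/(2X, pY) → (ℤ/2)[X] × (ℤ/p)[Y]` is the ideal generated by the constant `2p`. -/
theorem ker_phi_eq_span_two_mul_p (p : ℕ) (hp : p.Prime) (hodd : Odd p) :
    RingHom.ker (phi p) =
      Ideal.span {Ideal.Quotient.mk (dihedralIdeal p) (C (2 * p : ℤ))} := by
  have step : RingHom.ker (phi p)
      = (RingHom.ker (psi p)).map (Ideal.Quotient.mk (dihedralIdeal p)) :=
    Ideal.ker_quotient_lift (psi p) (psi_vanishes p)
  rw [step, ker_psi_eq p hp hodd, bigIdeal, Ideal.map_span]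
  have hz1 : Ideal.Quotient.mk (dihedralIdeal p) (C 2 * X 0) = 0 :=
    Ideal.Quotient.eq_zero_iff_mem.mpr (Ideal.subset_span (by simp))
  have hz2 : Ideal.Quotient.mk (dihedralIdeal p) (C ((p:ℤ)) * X 1) = 0 :=
    Ideal.Quotient.eq_zero_iff_mem.mpr (Ideal.subset_span (by simp))
  rw [Set.image_insert_eq, Set.image_insert_eq, Set.image_singleton, hz1, hz2]
  have : ({Ideal.Quotient.mk (dihedralIdeal p) (C (2 * p : ℤ)), 0, 0} :
      Set (MvPolynomial (Fin 2) ℤ ⧸ dihedralIdeal p))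
      = insert 0 {Ideal.Quotient.mk (dihedralIdeal p) (C (2 * p : ℤ))} := by
    simp [Set.insert_comm, Set.pair_comm]
  rw [this]
  apply le_antisymm
  · rw [Ideal.span_le]
    rintro x hx
    rcases hx with rfl | hx
    · exact zero_mem _
    · exact Ideal.subset_span hx
  · exact Ideal.span_mono (Set.subset_insert _ _)
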